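/- Let u: Ω → ℝ be harmonic in Ω = {|u| < 1} ⊂ ℝⁿ with |∇u| = 1 on ∂Ω, with sufficiently smooth free boundary, and suppose |∇u| ≤ 1 throughout {|u| < 1}. Then the mean curvature of ∂{|u| < 1} is nonnegative with respect to the unit normal pointing outwards of {|u| < 1}. -/

import Mathlib

open MeasureTheory

open Filter Set Topology in
private lemma aux_deriv_nonpos {φ : ℝ → ℝ} {c : ℝ}
    (h : HasDerivAt φ c 0) (h2 : ∀ᶠ t in 𝓝[>] (0:ℝ), φ t ≤ φ 0) : c ≤ 0 := by
  have hs : Tendsto (slope φ 0) (𝓝[>] (0:ℝ)) (𝓝 c) :=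
    (hasDerivAt_iff_tendsto_slope.mp h).mono_left
      (nhdsWithin_mono _ (fun t ht => ne_of_gt ht))
  refine le_of_tendsto hs ?_
  filter_upwards [h2, self_mem_nhdsWithin] with t ht ht0
  rw [slope_def_field]
  exact div_nonpos_of_nonpos_of_nonneg (sub_nonpos.2 ht) (by simpa using (le_of_lt ht0))

theorem stmt_11 (n : ℕ) (hn : 2 ≤ n) (u : EuclideanSpace ℝ (Fin n) → ℝ)
    (U : Set (EuclideanSpace ℝ (Fin n))) (hU : IsOpen U)
    (Ω : Set (EuclideanSpace ℝ (Fin n))) (hΩ : Ω = {x | |u x| < 1})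
    (hclos : closure Ω ⊆ U)
    (hu : ContDiffOn ℝ 2 u U)
    (hharm : ∀ x ∈ Ω,
      ∑ i, fderiv ℝ (fun y => gradient u y i) x (EuclideanSpace.single i 1) = 0)
    (hgrad1 : ∀ x ∈ frontier Ω, ‖gradient u x‖ = 1)
    (hgradle : ∀ x ∈ Ω, ‖gradient u x‖ ≤ 1) :
    ∀ x ∈ frontier Ω,
      (u x = 1 →
        ∑ i, fderiv ℝ (fun y => (‖gradient u y‖⁻¹ • gradient u y) i) x
            (EuclideanSpace.single i 1) ≤ 0) ∧
      (u x = -1 →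
        0 ≤ ∑ i, fderiv ℝ (fun y => (‖gradient u y‖⁻¹ • gradient u y) i) x
            (EuclideanSpace.single i 1)) := by
  intro x hx
  have hxcl : x ∈ closure Ω := frontier_subset_closure hx
  have hxU : x ∈ U := hclos hxcl
  have hGx1 : ‖gradient u x‖ = 1 := hgrad1 x hx
  have hGx0 : gradient u x ≠ 0 := by
    intro h; rw [h] at hGx1; simp at hGx1
  -- the gradient is C¹ on U
  have hG1 : ∀ y ∈ U, ContDiffAt ℝ 1 (fun z => gradient u z) y := by
    intro y hy
    have h2 : ContDiffAt ℝ 2 u y := hu.contDiffAt (hU.mem_nhds hy)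
    have hf : ContDiffAt ℝ 1 (fderiv ℝ u) y := h2.fderiv_right (by norm_num)
    exact ((InnerProductSpace.toDual ℝ
      (EuclideanSpace ℝ (Fin n))).symm.contDiff.comp_contDiffAt y hf)
  have hGdiff : DifferentiableAt ℝ (fun z => gradient u z) x :=
    (hG1 x hxU).differentiableAt one_ne_zero
  have hgdiff : DifferentiableAt ℝ (fun z => ‖gradient u z‖) x :=
    hGdiff.norm ℝ hGx0
  have hudiff : DifferentiableAt ℝ u x :=
    (hu.contDiffAt (hU.mem_nhds hxU)).differentiableAt (by norm_num)
  -- the fderiv of u in terms of the gradient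
  have hfd : ∀ v, fderiv ℝ u x v = @inner ℝ _ _ (gradient u x) v := by
    intro v
    exact (InnerProductSpace.toDual_symm_apply).symm
  -- the Laplacian of u vanishes at x, by continuity from Ω
  have hlapx : ∑ i, (fderiv ℝ (fun z => gradient u z) x (EuclideanSpace.single i 1)) i
      = 0 := by
    have hproj : ∀ y ∈ U, ∀ i : Fin n, fderiv ℝ (fun z => gradient u z i) y
        = (EuclideanSpace.proj i : EuclideanSpace ℝ (Fin n) →L[ℝ] ℝ).comp
          (fderiv ℝ (fun z => gradient u z) y) := by
      intro y hy i
      have h := ((EuclideanSpace.proj i : EuclideanSpace ℝ (Fin n) →L[ℝ] ℝ).hasFDerivAt.comp y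
        ((hG1 y hy).differentiableAt one_ne_zero).hasFDerivAt)
      have h' : HasFDerivAt (fun z => gradient u z i)
          ((EuclideanSpace.proj i : EuclideanSpace ℝ (Fin n) →L[ℝ] ℝ).comp
            (fderiv ℝ (fun z => gradient u z) y)) y := h
      exact h'.fderiv
    set H : EuclideanSpace ℝ (Fin n) → ℝ :=
      fun y => ∑ i, (fderiv ℝ (fun z => gradient u z) y (EuclideanSpace.single i 1)) i with hH
    have hcont : ContinuousAt H x := by
      have hcf : ContinuousOn (fderiv ℝ (fun z => gradient u z)) U :=
        ContDiffOn.continuousOn_fderiv_of_isOpen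
          (fun y hy => (hG1 y hy).contDiffWithinAt) hU le_rfl
      have hca : ContinuousAt (fderiv ℝ (fun z => gradient u z)) x :=
        hcf.continuousAt (hU.mem_nhds hxU)
      have hφ : Continuous (fun L : EuclideanSpace ℝ (Fin n) →L[ℝ] EuclideanSpace ℝ (Fin n) =>
          ∑ i, (L (EuclideanSpace.single i 1)) i) := by
        refine continuous_finset_sum _ fun i _ => ?_
        exact (EuclideanSpace.proj i :
          EuclideanSpace ℝ (Fin n) →L[ℝ] ℝ).continuous.comp
          ((ContinuousLinearMap.apply ℝ (EuclideanSpace ℝ (Fin n))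
            (EuclideanSpace.single i 1)).continuous)
      exact hφ.continuousAt.comp hca
    have hzero : ∀ y ∈ Ω, H y = 0 := by
      intro y hy
      have hyU : y ∈ U := hclos (subset_closure hy)
      rw [hH, ← hharm y hy]
      refine Finset.sum_congr rfl fun i _ => ?_
      rw [hproj y hyU i]
      rfl
    have hne : (nhdsWithin x Ω).NeBot := mem_closure_iff_nhdsWithin_neBot.mp hxcl
    have h1 : Filter.Tendsto H (nhdsWithin x Ω) (nhds (H x)) :=
      hcont.continuousWithinAt.tendsto
    have h2 : Filter.Tendsto H (nhdsWithin x Ω) (nhds 0) := by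
      apply Filter.Tendsto.congr' ?_ tendsto_const_nhds
      filter_upwards [self_mem_nhdsWithin] with y hy using (hzero y hy).symm
    exact tendsto_nhds_unique h1 h2
  -- straight-line curves from x
  have hγ : ∀ d : EuclideanSpace ℝ (Fin n), HasDerivAt (fun t : ℝ => x + t • d) d 0 := by
    intro d
    simpa using ((hasDerivAt_id (0:ℝ)).smul_const d).const_add x
  -- key sign fact: directions entering Ω do not increase |∇u|
  have key : ∀ d : EuclideanSpace ℝ (Fin n),
      (∀ᶠ t in nhdsWithin (0:ℝ) (Set.Ioi 0), x + t • d ∈ Ω) →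
      fderiv ℝ (fun z => ‖gradient u z‖) x d ≤ 0 := by
    intro d hd
    have h0 : HasFDerivAt (fun z => ‖gradient u z‖)
        (fderiv ℝ (fun z => ‖gradient u z‖) x) ((fun t : ℝ => x + t • d) 0) := by
      simpa using hgdiff.hasFDerivAt
    have hφ : HasDerivAt (fun t : ℝ => ‖gradient u (x + t • d)‖)
        (fderiv ℝ (fun z => ‖gradient u z‖) x d) 0 :=
        h0.comp_hasDerivAt (f := fun t : ℝ => x + t • d) 0 (hγ d)
    refine aux_deriv_nonpos hφ ?_
    filter_upwards [hd] with t ht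
    have h1 := hgradle _ ht
    simpa [hGx1] using h1
  -- derivative of u along straight lines
  have hψ : ∀ d : EuclideanSpace ℝ (Fin n),
      HasDerivAt (fun t : ℝ => u (x + t • d)) (fderiv ℝ u x d) 0 := by
    intro d
    have h0 : HasFDerivAt u (fderiv ℝ u x) ((fun t : ℝ => x + t • d) 0) := by
      simpa using hudiff.hasFDerivAt
    exact h0.comp_hasDerivAt 0 (hγ d)
  -- lines pointing inwards enter Ω
  have enter : ∀ (d : EuclideanSpace ℝ (Fin n)) (c : ℝ),
      HasDerivAt (fun t : ℝ => u (x + t • d)) c 0 →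
      ((u x = -1 ∧ 0 < c) ∨ (u x = 1 ∧ c < 0)) →
      ∀ᶠ t in nhdsWithin (0:ℝ) (Set.Ioi 0), x + t • d ∈ Ω := by
    intro d c hder hcase
    have hcont : ContinuousAt (fun t : ℝ => u (x + t • d)) 0 := hder.continuousAt
    have hs : Filter.Tendsto (slope (fun t : ℝ => u (x + t • d)) 0)
        (nhdsWithin (0:ℝ) (Set.Ioi 0)) (nhds c) :=
      (hasDerivAt_iff_tendsto_slope.mp hder).mono_left
        (nhdsWithin_mono _ (fun t ht => ne_of_gt ht))
    rcases hcase with ⟨hux, hc⟩ | ⟨hux, hc⟩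
    · have h1 : ∀ᶠ t in nhdsWithin (0:ℝ) (Set.Ioi 0),
          0 < slope (fun t : ℝ => u (x + t • d)) 0 t :=
        hs.eventually (eventually_gt_nhds hc)
      have h2 : ∀ᶠ t in nhdsWithin (0:ℝ) (Set.Ioi 0), u (x + t • d) < 1 := by
        have h2' : ∀ᶠ t in nhds (0:ℝ), u (x + t • d) < 1 := by
          refine hcont.eventually_lt continuousAt_const ?_
          simp [hux]
        exact h2'.filter_mono nhdsWithin_le_nhds
      filter_upwards [h1, h2, self_mem_nhdsWithin] with t h1t h2t ht0
      rw [slope_def_field] at h1t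
      have hnum : 0 < u (x + t • d) - u (x + (0:ℝ) • d) := by
        rcases div_pos_iff.mp h1t with ⟨h, _⟩ | ⟨_, h⟩
        · exact h
        · exfalso
          have ht' : (0:ℝ) < t := ht0
          simp only [sub_zero] at h; linarith
      have h0 : u (x + (0:ℝ) • d) = -1 := by simpa using hux
      rw [hΩ]
      simp only [Set.mem_setOf_eq, abs_lt]
      refine ⟨?_, h2t⟩
      rw [h0] at hnum; linarith
    · have h1 : ∀ᶠ t in nhdsWithin (0:ℝ) (Set.Ioi 0),
          slope (fun t : ℝ => u (x + t • d)) 0 t < 0 :=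
        hs.eventually (eventually_lt_nhds hc)
      have h2 : ∀ᶠ t in nhdsWithin (0:ℝ) (Set.Ioi 0), -1 < u (x + t • d) := by
        have h2' : ∀ᶠ t in nhds (0:ℝ), -1 < u (x + t • d) := by
          refine continuousAt_const.eventually_lt hcont ?_
          simp [hux]
        exact h2'.filter_mono nhdsWithin_le_nhds
      filter_upwards [h1, h2, self_mem_nhdsWithin] with t h1t h2t ht0
      rw [slope_def_field] at h1t
      have hnum : u (x + t • d) - u (x + (0:ℝ) • d) < 0 := by
        rcases div_neg_iff.mp h1t with ⟨_, h⟩ | ⟨h, _⟩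
        · exfalso
          have ht' : (0:ℝ) < t := ht0
          simp only [sub_zero] at h; linarith
        · exact h
      have h0 : u (x + (0:ℝ) • d) = 1 := by simpa using hux
      rw [hΩ]
      simp only [Set.mem_setOf_eq, abs_lt]
      refine ⟨h2t, ?_⟩
      rw [h0] at hnum; linarith
  -- the divergence of the unit normal field equals -D‖∇u‖(∇u x)
  have hDgsum : ∑ i, fderiv ℝ (fun y => (‖gradient u y‖⁻¹ • gradient u y) i) x
      (EuclideanSpace.single i 1)
      = - fderiv ℝ (fun z => ‖gradient u z‖) x (gradient u x) := by
    have hgne : ‖gradient u x‖ ≠ 0 := by rw [hGx1]; norm_num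
    have hinv : DifferentiableAt ℝ (fun z => ‖gradient u z‖⁻¹) x := hgdiff.inv hgne
    have hF : DifferentiableAt ℝ (fun z => ‖gradient u z‖⁻¹ • gradient u z) x :=
      hinv.smul hGdiff
    have hinvfd : ∀ v, fderiv ℝ (fun z => ‖gradient u z‖⁻¹) x v
        = -(fderiv ℝ (fun z => ‖gradient u z‖) x v) := by
      intro v
      have h := (hasFDerivAt_inv (x := ‖gradient u x‖) hgne).comp x hgdiff.hasFDerivAt
      have h' : HasFDerivAt (fun z => ‖gradient u z‖⁻¹)
          ((ContinuousLinearMap.smulRight (1 : ℝ →L[ℝ] ℝ) (-(‖gradient u x‖ ^ 2)⁻¹)).comp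
            (fderiv ℝ (fun z => ‖gradient u z‖) x)) x := h
      rw [h'.fderiv]
      simp [hGx1]
    have hFfd : fderiv ℝ (fun z => ‖gradient u z‖⁻¹ • gradient u z) x
        = ‖gradient u x‖⁻¹ • fderiv ℝ (fun z => gradient u z) x
          + (fderiv ℝ (fun z => ‖gradient u z‖⁻¹) x).smulRight (gradient u x) :=
      fderiv_smul hinv hGdiff
    have hcomp : ∀ i : Fin n, fderiv ℝ (fun y => (‖gradient u y‖⁻¹ • gradient u y) i) x
        (EuclideanSpace.single i 1)
        = (fderiv ℝ (fun z => ‖gradient u z‖⁻¹ • gradient u z) x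
            (EuclideanSpace.single i 1)) i := by
      intro i
      have h := ((EuclideanSpace.proj i : EuclideanSpace ℝ (Fin n) →L[ℝ] ℝ).hasFDerivAt.comp x
        hF.hasFDerivAt)
      have h' : HasFDerivAt (fun y => (‖gradient u y‖⁻¹ • gradient u y) i)
          ((EuclideanSpace.proj i : EuclideanSpace ℝ (Fin n) →L[ℝ] ℝ).comp
            (fderiv ℝ (fun z => ‖gradient u z‖⁻¹ • gradient u z) x)) x := h
      rw [h'.fderiv]
      rfl
    have hbasis : ∑ i, (gradient u x i) • EuclideanSpace.single i (1:ℝ) = gradient u x := by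
      ext j
      rw [show (∑ i, gradient u x i • EuclideanSpace.single i (1:ℝ)) j
          = (EuclideanSpace.proj j : EuclideanSpace ℝ (Fin n) →L[ℝ] ℝ)
            (∑ i, gradient u x i • EuclideanSpace.single i (1:ℝ)) from rfl, _root_.map_sum]
      simp [EuclideanSpace.single_apply]
    calc (∑ i, fderiv ℝ (fun y => (‖gradient u y‖⁻¹ • gradient u y) i) x
          (EuclideanSpace.single i 1))
        = ∑ i, ((‖gradient u x‖⁻¹ • fderiv ℝ (fun z => gradient u z) x
          + (fderiv ℝ (fun z => ‖gradient u z‖⁻¹) x).smulRight (gradient u x))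
            (EuclideanSpace.single i 1)) i := by
          refine Finset.sum_congr rfl fun i _ => ?_
          rw [hcomp i, hFfd]
      _ = ∑ i, (‖gradient u x‖⁻¹
            * (fderiv ℝ (fun z => gradient u z) x (EuclideanSpace.single i 1)) i
          + fderiv ℝ (fun z => ‖gradient u z‖⁻¹) x (EuclideanSpace.single i 1)
            * gradient u x i) := by
          refine Finset.sum_congr rfl fun i _ => ?_
          simp [ContinuousLinearMap.smulRight_apply]
      _ = ‖gradient u x‖⁻¹
            * ∑ i, (fderiv ℝ (fun z => gradient u z) x (EuclideanSpace.single i 1)) i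
          + ∑ i, fderiv ℝ (fun z => ‖gradient u z‖⁻¹) x (EuclideanSpace.single i 1)
            * gradient u x i := by
          rw [Finset.sum_add_distrib, Finset.mul_sum]
      _ = ∑ i, fderiv ℝ (fun z => ‖gradient u z‖⁻¹) x (EuclideanSpace.single i 1)
            * gradient u x i := by
          rw [hlapx]; ring
      _ = fderiv ℝ (fun z => ‖gradient u z‖⁻¹) x (gradient u x) := by
          conv_rhs => rw [← hbasis]
          rw [_root_.map_sum]
          refine Finset.sum_congr rfl fun i _ => ?_
          rw [ContinuousLinearMap.map_smul]
          simp [mul_comm]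
      _ = - fderiv ℝ (fun z => ‖gradient u z‖) x (gradient u x) := by
          rw [hinvfd]
  have hinnerpos : (0:ℝ) < @inner ℝ _ _ (gradient u x) (gradient u x) := by
    rw [real_inner_self_eq_norm_sq, hGx1]; norm_num
  constructor
  · intro hux
    rw [hDgsum, neg_nonpos]
    have h1 : fderiv ℝ u x (-(gradient u x)) < 0 := by
      rw [hfd, inner_neg_right]; linarith
    have h2 := key (-(gradient u x)) (enter _ _ (hψ _) (Or.inr ⟨hux, h1⟩))
    rw [map_neg] at h2
    linarith
  · intro hux
    rw [hDgsum, neg_nonneg]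
    have h1 : 0 < fderiv ℝ u x (gradient u x) := by
      rw [hfd]; exact hinnerpos
    exact key (gradient u x) (enter _ _ (hψ _) (Or.inl ⟨hux, h1⟩))
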